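/- Let M satisfy the Reset Cliff assumption and let (P̂_h)_{h=1}^H be admissible estimates. If π^{AIL} is any global minimizer of the VAIL objective L(π) = Σ_{h=1}^H Σ_{(s,a)} |P^π_h(s,a) − P̂_h(s,a)|, then for every h ∈ {1,…,H} there exists s ∈ S^G with π^{AIL}_h(a¹|s) > 0. -/

import Mathlib

open Finset

/-- State distribution `d^π_h` of a policy `π` in an episodic tabular MDP
(time steps are 0-indexed: `stateDist ρ P π 0 = ρ`). -/
noncomputable def stateDist {S A : Type*} [Fintype S] [Fintype A] (ρ : S → ℝ)
    (P : ℕ → S → A → S → ℝ) (π : ℕ → S → A → ℝ) : ℕ → S → ℝ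
  | 0 => ρ
  | h + 1 => fun s' => ∑ s : S, ∑ a : A, stateDist ρ P π h s * π h s a * P h s a s'

/-- State-action distribution `P^π_h(s,a) = d^π_h(s) π_h(a|s)`. -/
noncomputable def saDist {S A : Type*} [Fintype S] [Fintype A] (ρ : S → ℝ)
    (P : ℕ → S → A → S → ℝ) (π : ℕ → S → A → ℝ) (h : ℕ) (s : S) (a : A) : ℝ :=
  stateDist ρ P π h s * π h s a

/-- Policy value `V^π = Σ_{h<H} Σ_{(s,a)} P^π_h(s,a) r_h(s,a)`. -/
noncomputable def policyValue {S A : Type*} [Fintype S] [Fintype A] (ρ : S → ℝ)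
    (P : ℕ → S → A → S → ℝ) (π : ℕ → S → A → ℝ) (r : ℕ → S → A → ℝ) (H : ℕ) : ℝ :=
  ∑ h ∈ Finset.range H, ∑ s : S, ∑ a : A, saDist ρ P π h s a * r h s a

/-- `π` is a (Markovian, non-stationary) policy. -/
def IsPolicy {S A : Type*} [Fintype A] (π : ℕ → S → A → ℝ) : Prop :=
  ∀ h s, (∀ a, 0 ≤ π h s a) ∧ (∑ a : A, π h s a) = 1

/-- `P` is a transition function. -/
def IsTransition {S A : Type*} [Fintype S] (P : ℕ → S → A → S → ℝ) : Prop :=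
  ∀ h s a, (∀ s', 0 ≤ P h s a s') ∧ (∑ s' : S, P h s a s') = 1

/-- `ρ` is an initial state distribution. -/
def IsInitDist {S : Type*} [Fintype S] (ρ : S → ℝ) : Prop :=
  (∀ s, 0 ≤ ρ s) ∧ (∑ s : S, ρ s) = 1

/-- Rewards take values in `[0,1]`. -/
def IsReward {S A : Type*} (r : ℕ → S → A → ℝ) : Prop :=
  ∀ h s a, 0 ≤ r h s a ∧ r h s a ≤ 1

/-- The VAIL state-action distribution matching objective
`L(π) = Σ_{h<H} Σ_{(s,a)} |P^π_h(s,a) − Q_h(s,a)|`. -/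
noncomputable def vailLoss {S A : Type*} [Fintype S] [Fintype A] (ρ : S → ℝ)
    (P : ℕ → S → A → S → ℝ) (π : ℕ → S → A → ℝ) (Q : ℕ → S → A → ℝ) (H : ℕ) : ℝ :=
  ∑ h ∈ Finset.range H, ∑ s : S, ∑ a : A, |saDist ρ P π h s a - Q h s a|

/-- The Reset Cliff assumption: good states `G` (with bad states `Gᶜ`), expert action `a1`. -/
def ResetCliff {S A : Type*} [Fintype S] [Fintype A] [DecidableEq S]
    (ρ : S → ℝ) (P : ℕ → S → A → S → ℝ) (r : ℕ → S → A → ℝ)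
    (G : Finset S) (a1 : A) : Prop :=
  G.Nonempty ∧
  (∀ (h : ℕ), ∀ s ∈ G, r h s a1 = 1) ∧
  (∀ (h : ℕ) (s : S) (a : A), (s ∉ G ∨ a ≠ a1) → r h s a = 0) ∧
  (∀ (h : ℕ), ∀ s ∈ G, (∑ s' ∈ G, P h s a1 s') = 1) ∧
  (∀ (h : ℕ), ∀ s ∈ G, ∀ s' ∈ G, 0 < P h s a1 s') ∧
  (∀ (h : ℕ), ∀ s ∈ G, ∀ a : A, a ≠ a1 → (∑ s' ∈ Gᶜ, P h s a s') = 1) ∧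
  (∀ (h : ℕ), ∀ s ∉ G, ∀ a : A, (∑ s' ∈ Gᶜ, P h s a s') = 1) ∧
  (∀ s ∈ G, 0 < ρ s) ∧
  (∀ s ∉ G, ρ s = 0)

/-- Admissible estimates for the expert state-action distributions on a Reset Cliff instance. -/
def AdmissibleEst {S A : Type*} [Fintype S] [DecidableEq S]
    (G : Finset S) (a1 : A) (Q : ℕ → S → A → ℝ) (H : ℕ) : Prop :=
  ∀ h < H, (∀ s a, 0 ≤ Q h s a) ∧
    (∀ (s : S) (a : A), (s ∉ G ∨ a ≠ a1) → Q h s a = 0) ∧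
    (∑ s ∈ G, Q h s a1) = 1

section Aux
variable {S A : Type*} [Fintype S] [Fintype A] {ρ : S → ℝ}
    {P : ℕ → S → A → S → ℝ} {π π' : ℕ → S → A → ℝ}

lemma stateDist_nonneg (hρ : IsInitDist ρ) (hP : IsTransition P) (hπ : IsPolicy π) :
    ∀ h s, 0 ≤ stateDist ρ P π h s := by
  intro h
  induction h with
  | zero => exact hρ.1
  | succ n ih =>
    intro s'
    apply Finset.sum_nonneg; intro s _
    apply Finset.sum_nonneg; intro a _
    exact mul_nonneg (mul_nonneg (ih s) ((hπ n s).1 a)) ((hP n s a).1 s')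

lemma stateDist_sum_one (hρ : IsInitDist ρ) (hP : IsTransition P) (hπ : IsPolicy π) :
    ∀ h, (∑ s : S, stateDist ρ P π h s) = 1 := by
  intro h
  induction h with
  | zero => exact hρ.2
  | succ n ih =>
    show (∑ s' : S, ∑ s : S, ∑ a : A, stateDist ρ P π n s * π n s a * P n s a s') = 1
    rw [Finset.sum_comm]
    have key : ∀ s : S, (∑ s' : S, ∑ a : A, stateDist ρ P π n s * π n s a * P n s a s')
        = stateDist ρ P π n s := by
      intro s
      rw [Finset.sum_comm]
      calc (∑ a : A, ∑ s' : S, stateDist ρ P π n s * π n s a * P n s a s')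
          = ∑ a : A, stateDist ρ P π n s * π n s a := by
            apply Finset.sum_congr rfl; intro a _
            rw [← Finset.mul_sum, (hP n s a).2, mul_one]
        _ = stateDist ρ P π n s := by rw [← Finset.mul_sum, (hπ n s).2, mul_one]
    rw [Finset.sum_congr rfl (fun s _ => key s), ih]

lemma stateDist_congr {n : ℕ} (hagree : ∀ h < n, π h = π' h) :
    ∀ h ≤ n, stateDist ρ P π h = stateDist ρ P π' h := by
  intro h
  induction h with
  | zero => intro _; rfl
  | succ k ih =>
    intro hk
    funext s'
    show (∑ s : S, ∑ a : A, stateDist ρ P π k s * π k s a * P k s a s')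
        = ∑ s : S, ∑ a : A, stateDist ρ P π' k s * π' k s a * P k s a s'
    rw [ih (Nat.le_of_succ_le hk), hagree k (Nat.lt_of_succ_le hk)]

lemma saDist_sum_one (hρ : IsInitDist ρ) (hP : IsTransition P) (hπ : IsPolicy π) (h : ℕ) :
    (∑ s : S, ∑ a : A, saDist ρ P π h s a) = 1 := by
  calc (∑ s : S, ∑ a : A, saDist ρ P π h s a) = ∑ s : S, stateDist ρ P π h s := by
        apply Finset.sum_congr rfl; intro s _
        unfold saDist
        rw [← Finset.mul_sum, (hπ h s).2, mul_one]
    _ = 1 := stateDist_sum_one hρ hP hπ h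

end Aux

/-- on any Reset Cliff instance with admissible estimates, any global minimizer
`πAIL` of the VAIL objective plays the expert action `a1` with positive probability on some
good state at every time step. -/
theorem vail_minimizer_positive_on_good {S A : Type*} [Fintype S] [Fintype A]
    [Nonempty S] [Nonempty A] [DecidableEq S]
    (ρ : S → ℝ) (P : ℕ → S → A → S → ℝ) (r : ℕ → S → A → ℝ)
    (πE πAIL : ℕ → S → A → ℝ) (G : Finset S) (a1 : A)
    (Q : ℕ → S → A → ℝ) (H : ℕ) (hH : 1 ≤ H)
    (hρ : IsInitDist ρ) (hP : IsTransition P) (hr : IsReward r)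
    (hE : IsPolicy πE) (hAILpol : IsPolicy πAIL)
    (hRC : ResetCliff ρ P r G a1)
    (hEa : ∀ h s, πE h s a1 = 1)
    (hQ : AdmissibleEst G a1 Q H)
    (hmin : ∀ π, IsPolicy π → vailLoss ρ P πAIL Q H ≤ vailLoss ρ P π Q H) :
    ∀ h < H, ∃ s ∈ G, 0 < πAIL h s a1 := by
  classical
  obtain ⟨hGne, hr1, hr0, hPG, hPpos, hPbad1, hPbad2, hρpos, hρ0⟩ := hRC
  -- P vanishes into good states except from (good, a1)
  have hPzero : ∀ (h : ℕ) (s : S) (a : A), ∀ s' ∈ G, (s ∉ G ∨ a ≠ a1) → P h s a s' = 0 := by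
    intro h s a s' hs' hcond
    have hbad : (∑ t ∈ Gᶜ, P h s a t) = 1 := by
      rcases hcond with h1 | h2
      · exact hPbad2 h s h1 a
      · by_cases hs : s ∈ G
        · exact hPbad1 h s hs a h2
        · exact hPbad2 h s hs a
    have hGzero : (∑ t ∈ G, P h s a t) = 0 := by
      have hsplit := Finset.sum_add_sum_compl G (P h s a)
      rw [(hP h s a).2] at hsplit
      linarith
    exact (Finset.sum_eq_zero_iff_of_nonneg (fun t _ => (hP h s a).1 t)).mp hGzero s' hs'
  -- recursion for good states
  have hrec : ∀ (π : ℕ → S → A → ℝ), ∀ (h : ℕ), ∀ s' ∈ G,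
      stateDist ρ P π (h+1) s' = ∑ s ∈ G, stateDist ρ P π h s * π h s a1 * P h s a1 s' := by
    intro π h s' hs'
    show (∑ s : S, ∑ a : A, stateDist ρ P π h s * π h s a * P h s a s') = _
    rw [← Finset.sum_subset G.subset_univ (fun s _ hs => Finset.sum_eq_zero (fun a _ => by
        rw [hPzero h s a s' hs' (Or.inl hs), mul_zero]))]
    apply Finset.sum_congr rfl
    intro s _
    exact Finset.sum_eq_single a1
      (fun b _ hb => by rw [hPzero h s b s' hs' (Or.inr hb), mul_zero])
      (fun hn => absurd (Finset.mem_univ a1) hn)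
  -- the good-action mass
  set W : (ℕ → S → A → ℝ) → ℕ → ℝ :=
    fun π h => ∑ s ∈ G, stateDist ρ P π h s * π h s a1 with hWdef
  have hWrec : ∀ (π : ℕ → S → A → ℝ), ∀ h, (∑ s' ∈ G, stateDist ρ P π (h+1) s') = W π h := by
    intro π h
    rw [Finset.sum_congr rfl (fun s' hs' => hrec π h s' hs'), Finset.sum_comm]
    apply Finset.sum_congr rfl
    intro s hs
    rw [← Finset.mul_sum, hPG h s hs, mul_one]
  -- contradiction setup
  by_contra hcon
  push_neg at hcon
  obtain ⟨h0, hh0H, hh0⟩ := hcon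
  have hW0 : W πAIL h0 = 0 := by
    apply Finset.sum_eq_zero
    intro s hs
    have h1 := (hAILpol h0 s).1 a1
    have h2 := hh0 s hs
    have : πAIL h0 s a1 = 0 := le_antisymm h2 h1
    rw [this, mul_zero]
  have hex : ∃ h, W πAIL h = 0 := ⟨h0, hW0⟩
  set h1 : ℕ := Nat.find hex with hh1def
  have hh1le : h1 ≤ h0 := Nat.find_min' hex hW0
  have hh1H : h1 < H := lt_of_le_of_lt hh1le hh0H
  have hWh1 : W πAIL h1 = 0 := Nat.find_spec hex
  -- nonnegativity facts
  have hdnn := stateDist_nonneg hρ hP hAILpol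
  -- W πAIL h = 0 for all h ≥ h1, and saDist vanishes on (G, a1) there
  have hWall : ∀ k, W πAIL (h1 + k) = 0 := by
    intro k
    induction k with
    | zero => simpa using hWh1
    | succ n ih =>
      have hGzero : (∑ s ∈ G, stateDist ρ P πAIL (h1 + n + 1) s) = 0 := by
        rw [hWrec πAIL (h1 + n), ih]
      have hdzero : ∀ s ∈ G, stateDist ρ P πAIL (h1 + n + 1) s = 0 :=
        (Finset.sum_eq_zero_iff_of_nonneg (fun s _ => hdnn (h1 + n + 1) s)).mp hGzero
      show W πAIL (h1 + n + 1) = 0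
      apply Finset.sum_eq_zero
      intro s hs
      rw [hdzero s hs, zero_mul]
  have hsa0 : ∀ h, h1 ≤ h → ∀ s ∈ G, stateDist ρ P πAIL h s * πAIL h s a1 = 0 := by
    intro h hh s hs
    have := hWall (h - h1)
    rw [Nat.add_sub_cancel' hh] at this
    exact (Finset.sum_eq_zero_iff_of_nonneg
      (fun t _ => mul_nonneg (hdnn h t) ((hAILpol h t).1 a1))).mp this s hs
  -- positivity of stateDist at h1 on all good states
  have hdpos : ∀ s ∈ G, 0 < stateDist ρ P πAIL h1 s := by
    rcases Nat.eq_zero_or_eq_succ_pred h1 with h10 | h1s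
    · intro s hs
      rw [h10]
      exact hρpos s hs
    · set k := h1 - 1 with hk
      have hklt : k < h1 := by omega
      have hWk : W πAIL k ≠ 0 := Nat.find_min hex hklt
      have hWknn : 0 ≤ W πAIL k :=
        Finset.sum_nonneg (fun s _ => mul_nonneg (hdnn k s) ((hAILpol k s).1 a1))
      have hWkpos : 0 < W πAIL k := lt_of_le_of_ne hWknn (Ne.symm hWk)
      obtain ⟨s0, hs0G, hs0pos⟩ :
          ∃ s0 ∈ G, 0 < stateDist ρ P πAIL k s0 * πAIL k s0 a1 := by
        by_contra hc
        push_neg at hc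
        have : W πAIL k ≤ 0 := Finset.sum_nonpos (fun s hs => hc s hs)
        linarith
      intro s' hs'
      have hstep : h1 = k + 1 := by omega
      rw [hstep, hrec πAIL k s' hs']
      have hterm : 0 < stateDist ρ P πAIL k s0 * πAIL k s0 a1 * P k s0 a1 s' :=
        mul_pos hs0pos (hPpos k s0 hs0G s' hs')
      refine lt_of_lt_of_le hterm (Finset.single_le_sum
        (fun s hs => mul_nonneg (mul_nonneg (hdnn k s) ((hAILpol k s).1 a1))
          ((hP k s a1).1 s')) hs0G)
  -- the modified policy
  set π' : ℕ → S → A → ℝ :=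
    fun h s a => if h < h1 then πAIL h s a else if a = a1 then 1 else 0 with hπ'def
  have hπ'pol : IsPolicy π' := by
    intro h s
    by_cases hh : h < h1
    · simpa [π', hh] using hAILpol h s
    · constructor
      · intro a
        simp only [π', hh, if_false]
        split_ifs <;> norm_num
      · simp [π', hh]
  have hagree : ∀ h < h1, πAIL h = π' h := by
    intro h hh
    funext s a
    simp [π', hh]
  have hdeq : ∀ h ≤ h1, stateDist ρ P πAIL h = stateDist ρ P π' h :=
    stateDist_congr hagree
  -- sums of Q
  have hQsum : ∀ h < H, (∑ s : S, ∑ a : A, Q h s a) = 1 := by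
    intro h hh
    obtain ⟨hQnn, hQz, hQ1⟩ := hQ h hh
    rw [← Finset.sum_subset G.subset_univ (fun s _ hs =>
      Finset.sum_eq_zero (fun a _ => hQz s a (Or.inl hs)))]
    rw [← hQ1]
    apply Finset.sum_congr rfl
    intro s _
    exact Finset.sum_eq_single a1 (fun b _ hb => hQz s b (Or.inr hb))
      (fun hn => absurd (Finset.mem_univ a1) hn)
  -- per-step loss facts
  have hLAIL : ∀ h, h1 ≤ h → h < H →
      (∑ s : S, ∑ a : A, |saDist ρ P πAIL h s a - Q h s a|) = 2 := by
    intro h hh1 hhH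
    obtain ⟨hQnn, hQz, hQ1⟩ := hQ h hhH
    have hpt : ∀ (s : S) (a : A),
        |saDist ρ P πAIL h s a - Q h s a| = saDist ρ P πAIL h s a + Q h s a := by
      intro s a
      by_cases hsa : s ∈ G ∧ a = a1
      · have hz : saDist ρ P πAIL h s a = 0 := by
          unfold saDist; rw [hsa.2]; exact hsa0 h hh1 s hsa.1
        rw [hz, zero_sub, abs_neg, abs_of_nonneg (hQnn s a), zero_add]
      · have hz : Q h s a = 0 := by
          rcases not_and_or.mp hsa with h' | h'
          · exact hQz s a (Or.inl h')
          · exact hQz s a (Or.inr h')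
        have hx : (0:ℝ) ≤ saDist ρ P πAIL h s a :=
          mul_nonneg (hdnn h s) ((hAILpol h s).1 a)
        rw [hz, sub_zero, add_zero, abs_of_nonneg hx]
    calc (∑ s : S, ∑ a : A, |saDist ρ P πAIL h s a - Q h s a|)
        = ∑ s : S, ∑ a : A, (saDist ρ P πAIL h s a + Q h s a) := by
          exact Finset.sum_congr rfl (fun s _ => Finset.sum_congr rfl (fun a _ => hpt s a))
      _ = (∑ s : S, ∑ a : A, saDist ρ P πAIL h s a) + ∑ s : S, ∑ a : A, Q h s a := by
          rw [← Finset.sum_add_distrib]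
          exact Finset.sum_congr rfl (fun s _ => Finset.sum_add_distrib)
      _ = 2 := by rw [saDist_sum_one hρ hP hAILpol h, hQsum h hhH]; norm_num
  have hd'nn := stateDist_nonneg hρ hP hπ'pol
  have hub : ∀ h < H, (∑ s : S, ∑ a : A, |saDist ρ P π' h s a - Q h s a|) ≤ 2 := by
    intro h hhH
    obtain ⟨hQnn, hQz, hQ1⟩ := hQ h hhH
    calc (∑ s : S, ∑ a : A, |saDist ρ P π' h s a - Q h s a|)
        ≤ ∑ s : S, ∑ a : A, (saDist ρ P π' h s a + Q h s a) := by
          apply Finset.sum_le_sum; intro s _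
          apply Finset.sum_le_sum; intro a _
          calc |saDist ρ P π' h s a - Q h s a| ≤ |saDist ρ P π' h s a| + |Q h s a| :=
                abs_sub _ _
            _ = saDist ρ P π' h s a + Q h s a := by
                have hx : (0:ℝ) ≤ saDist ρ P π' h s a :=
                  mul_nonneg (hd'nn h s) ((hπ'pol h s).1 a)
                rw [abs_of_nonneg hx, abs_of_nonneg (hQnn s a)]
      _ = 2 := by
          have hsplit : (∑ s : S, ∑ a : A, (saDist ρ P π' h s a + Q h s a))
              = (∑ s : S, ∑ a : A, saDist ρ P π' h s a) + ∑ s : S, ∑ a : A, Q h s a := by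
            rw [← Finset.sum_add_distrib]
            exact Finset.sum_congr rfl (fun s _ => Finset.sum_add_distrib)
          rw [hsplit, saDist_sum_one hρ hP hπ'pol h, hQsum h hhH]; norm_num
  -- strict inequality at step h1 for π'
  obtain ⟨hQnn1, hQz1, hQ11⟩ := hQ h1 hh1H
  obtain ⟨sstar, hsstarG, hsstarpos⟩ : ∃ s ∈ G, 0 < Q h1 s a1 := by
    by_contra hc
    push_neg at hc
    have : (∑ s ∈ G, Q h1 s a1) ≤ 0 := Finset.sum_nonpos (fun s hs => hc s hs)
    linarith
  have hstrict : (∑ s : S, ∑ a : A, |saDist ρ P π' h1 s a - Q h1 s a|) < 2 := by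
    have hptle : ∀ (s : S) (a : A),
        |saDist ρ P π' h1 s a - Q h1 s a| ≤ saDist ρ P π' h1 s a + Q h1 s a := by
      intro s a
      have hx : (0:ℝ) ≤ saDist ρ P π' h1 s a :=
        mul_nonneg (hd'nn h1 s) ((hπ'pol h1 s).1 a)
      calc |saDist ρ P π' h1 s a - Q h1 s a| ≤ |saDist ρ P π' h1 s a| + |Q h1 s a| :=
            abs_sub _ _
        _ = saDist ρ P π' h1 s a + Q h1 s a := by
            rw [abs_of_nonneg hx, abs_of_nonneg (hQnn1 s a)]
    have hsapos : 0 < saDist ρ P π' h1 sstar a1 := by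
      have hπ'1 : π' h1 sstar a1 = 1 := by simp [π']
      have hds : stateDist ρ P π' h1 sstar = stateDist ρ P πAIL h1 sstar := by
        rw [hdeq h1 le_rfl]
      unfold saDist
      rw [hπ'1, hds, mul_one]
      exact hdpos sstar hsstarG
    have hptlt : |saDist ρ P π' h1 sstar a1 - Q h1 sstar a1|
        < saDist ρ P π' h1 sstar a1 + Q h1 sstar a1 := by
      rw [abs_sub_lt_iff]
      constructor <;> linarith
    have hlt : (∑ s : S, ∑ a : A, |saDist ρ P π' h1 s a - Q h1 s a|)
        < ∑ s : S, ∑ a : A, (saDist ρ P π' h1 s a + Q h1 s a) := by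
      apply Finset.sum_lt_sum
      · intro s _
        exact Finset.sum_le_sum (fun a _ => hptle s a)
      · refine ⟨sstar, Finset.mem_univ sstar, ?_⟩
        apply Finset.sum_lt_sum
        · intro a _; exact hptle sstar a
        · exact ⟨a1, Finset.mem_univ a1, hptlt⟩
    have hsplit : (∑ s : S, ∑ a : A, (saDist ρ P π' h1 s a + Q h1 s a))
        = (∑ s : S, ∑ a : A, saDist ρ P π' h1 s a) + ∑ s : S, ∑ a : A, Q h1 s a := by
      rw [← Finset.sum_add_distrib]
      exact Finset.sum_congr rfl (fun s _ => Finset.sum_add_distrib)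
    calc (∑ s : S, ∑ a : A, |saDist ρ P π' h1 s a - Q h1 s a|)
        < ∑ s : S, ∑ a : A, (saDist ρ P π' h1 s a + Q h1 s a) := hlt
      _ = 2 := by rw [hsplit, saDist_sum_one hρ hP hπ'pol h1, hQsum h1 hh1H]; norm_num
  -- assemble: vailLoss π' < vailLoss πAIL
  have hfinal : vailLoss ρ P π' Q H < vailLoss ρ P πAIL Q H := by
    unfold vailLoss
    rw [← Finset.sum_range_add_sum_Ico _ (le_of_lt hh1H),
      ← Finset.sum_range_add_sum_Ico
        (fun h => ∑ s : S, ∑ a : A, |saDist ρ P πAIL h s a - Q h s a|) (le_of_lt hh1H)]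
    have hpre : (∑ h ∈ Finset.range h1, ∑ s : S, ∑ a : A, |saDist ρ P π' h s a - Q h s a|)
        = ∑ h ∈ Finset.range h1, ∑ s : S, ∑ a : A, |saDist ρ P πAIL h s a - Q h s a| := by
      apply Finset.sum_congr rfl
      intro h hh
      rw [Finset.mem_range] at hh
      have : saDist ρ P π' h = saDist ρ P πAIL h := by
        funext s a
        unfold saDist
        rw [hdeq h (le_of_lt hh), hagree h hh]
      rw [this]
    have htail : (∑ h ∈ Finset.Ico h1 H, ∑ s : S, ∑ a : A, |saDist ρ P π' h s a - Q h s a|)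
        < ∑ h ∈ Finset.Ico h1 H, ∑ s : S, ∑ a : A, |saDist ρ P πAIL h s a - Q h s a| := by
      apply Finset.sum_lt_sum
      · intro h hh
        rw [Finset.mem_Ico] at hh
        rw [hLAIL h hh.1 hh.2]
        exact hub h hh.2
      · refine ⟨h1, Finset.mem_Ico.mpr ⟨le_rfl, hh1H⟩, ?_⟩
        rw [hLAIL h1 le_rfl hh1H]
        exact hstrict
    rw [hpre]
    exact add_lt_add_of_le_of_lt le_rfl htail
  exact absurd (hmin π' hπ'pol) (not_le.mpr hfinal)
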